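/- Let W(V,t) = N(d₁) − (V/(b e^{−a(T−t)}))^{1 − 2(r−q−a)/σ²}·N(d₂) with d₁, d₂ as in the structural credit-bond model. Then W satisfies ∂W/∂t + ½σ²V²∂²W/∂V² + (r−q)V·∂W/∂V = 0 for V > b·e^{−a(T−t)}, 0 < t < T, together with the boundary condition W(b e^{−a(T−t)}, t) = 0 for 0 ≤ t < T. -/

import Mathlib

open Real Set Filter Topology
open MeasureTheory intervalIntegral

noncomputable def stdNormalCDF (x : ℝ) : ℝ :=
  (Real.sqrt (2 * Real.pi))⁻¹ * ∫ t in Set.Iic x, Real.exp (-t ^ 2 / 2)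

lemma integrable_gauss : Integrable (fun t : ℝ => Real.exp (-t ^ 2 / 2)) := by
  have h := integrable_exp_neg_mul_sq (by norm_num : (0:ℝ) < 1/2)
  convert h using 2 with t
  ring_nf

lemma hasDerivAt_stdNormalCDF (x : ℝ) :
    HasDerivAt stdNormalCDF ((Real.sqrt (2 * Real.pi))⁻¹ * Real.exp (-x ^ 2 / 2)) x := by
  have hint : ∀ y : ℝ, (∫ t in Set.Iic y, Real.exp (-t ^ 2 / 2)) =
      (∫ t in Set.Iic (0:ℝ), Real.exp (-t ^ 2 / 2)) + ∫ t in (0:ℝ)..y, Real.exp (-t ^ 2 / 2) := by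
    intro y
    rw [← integral_Iic_sub_Iic integrable_gauss.integrableOn integrable_gauss.integrableOn]
    ring
  have hd : HasDerivAt (fun y => ∫ t in (0:ℝ)..y, Real.exp (-t ^ 2 / 2)) (Real.exp (-x ^ 2 / 2)) x := by
    refine integral_hasDerivAt_right (integrable_gauss.intervalIntegrable)
      integrable_gauss.aestronglyMeasurable.stronglyMeasurableAtFilter (by fun_prop)
  have h2 : HasDerivAt (fun y => (Real.sqrt (2 * Real.pi))⁻¹ *
      ((∫ t in Set.Iic (0:ℝ), Real.exp (-t ^ 2 / 2)) + ∫ t in (0:ℝ)..y, Real.exp (-t ^ 2 / 2)))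
      ((Real.sqrt (2 * Real.pi))⁻¹ * Real.exp (-x ^ 2 / 2)) x :=
    ((hd.const_add _).const_mul _)
  convert h2 using 1
  unfold stdNormalCDF
  funext y
  rw [hint y]

lemma space1 (r q σ a b T t : ℝ) (hσ : 0 < σ) (hτ : 0 < T - t) (y : ℝ) (hy : 0 < y) :
    HasDerivAt (fun x : ℝ =>
      stdNormalCDF ((Real.log x - Real.log b + (r - q - σ ^ 2 / 2) * (T - t)) / (σ * Real.sqrt (T - t))) -
        Real.exp ((1 - 2 * (r - q - a) / σ ^ 2) * (Real.log x - Real.log b + a * (T - t))) *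
          stdNormalCDF ((Real.log b - Real.log x + (r - q - 2 * a - σ ^ 2 / 2) * (T - t)) / (σ * Real.sqrt (T - t))))
      ((Real.sqrt (2 * Real.pi))⁻¹ * Real.exp (-((Real.log y - Real.log b + (r - q - σ ^ 2 / 2) * (T - t)) / (σ * Real.sqrt (T - t))) ^ 2 / 2) / (y * (σ * Real.sqrt (T - t)))
        - Real.exp ((1 - 2 * (r - q - a) / σ ^ 2) * (Real.log y - Real.log b + a * (T - t))) *
          ((1 - 2 * (r - q - a) / σ ^ 2) * stdNormalCDF ((Real.log b - Real.log y + (r - q - 2 * a - σ ^ 2 / 2) * (T - t)) / (σ * Real.sqrt (T - t))) / y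
            - (Real.sqrt (2 * Real.pi))⁻¹ * Real.exp (-((Real.log b - Real.log y + (r - q - 2 * a - σ ^ 2 / 2) * (T - t)) / (σ * Real.sqrt (T - t))) ^ 2 / 2) / (y * (σ * Real.sqrt (T - t))))) y := by
  have hs : (0:ℝ) < σ * Real.sqrt (T - t) := by positivity
  have hlog := Real.hasDerivAt_log hy.ne'
  have h1 : HasDerivAt (fun x : ℝ => (Real.log x - Real.log b + (r - q - σ ^ 2 / 2) * (T - t)) / (σ * Real.sqrt (T - t))) (y⁻¹ / (σ * Real.sqrt (T - t))) y :=
    ((hlog.sub_const _).add_const _).div_const _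
  have h2 : HasDerivAt (fun x : ℝ => (Real.log b - Real.log x + (r - q - 2 * a - σ ^ 2 / 2) * (T - t)) / (σ * Real.sqrt (T - t))) (-y⁻¹ / (σ * Real.sqrt (T - t))) y := by
    have h := ((hlog.const_sub (Real.log b)).add_const ((r - q - 2 * a - σ ^ 2 / 2) * (T - t))).div_const (σ * Real.sqrt (T - t))
    convert h using 1
  have hN1 : HasDerivAt (fun x : ℝ => stdNormalCDF ((Real.log x - Real.log b + (r - q - σ ^ 2 / 2) * (T - t)) / (σ * Real.sqrt (T - t))))
      ((Real.sqrt (2 * Real.pi))⁻¹ * Real.exp (-((Real.log y - Real.log b + (r - q - σ ^ 2 / 2) * (T - t)) / (σ * Real.sqrt (T - t))) ^ 2 / 2) * (y⁻¹ / (σ * Real.sqrt (T - t)))) y :=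
    (hasDerivAt_stdNormalCDF _).comp y h1
  have hN2 : HasDerivAt (fun x : ℝ => stdNormalCDF ((Real.log b - Real.log x + (r - q - 2 * a - σ ^ 2 / 2) * (T - t)) / (σ * Real.sqrt (T - t))))
      ((Real.sqrt (2 * Real.pi))⁻¹ * Real.exp (-((Real.log b - Real.log y + (r - q - 2 * a - σ ^ 2 / 2) * (T - t)) / (σ * Real.sqrt (T - t))) ^ 2 / 2) * (-y⁻¹ / (σ * Real.sqrt (T - t)))) y :=
    (hasDerivAt_stdNormalCDF _).comp y h2
  have hG : HasDerivAt (fun x : ℝ => Real.exp ((1 - 2 * (r - q - a) / σ ^ 2) * (Real.log x - Real.log b + a * (T - t))))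
      (Real.exp ((1 - 2 * (r - q - a) / σ ^ 2) * (Real.log y - Real.log b + a * (T - t))) * ((1 - 2 * (r - q - a) / σ ^ 2) * y⁻¹)) y :=
    (((hlog.sub_const _).add_const _).const_mul _).exp
  have h := hN1.sub (hG.mul hN2)
  refine h.congr_deriv ?_
  field_simp
  ring

lemma space2 (r q σ a b T t : ℝ) (hσ : 0 < σ) (hτ : 0 < T - t) (y : ℝ) (hy : 0 < y) :
    HasDerivAt (fun x : ℝ =>
      (Real.sqrt (2 * Real.pi))⁻¹ * Real.exp (-((Real.log x - Real.log b + (r - q - σ ^ 2 / 2) * (T - t)) / (σ * Real.sqrt (T - t))) ^ 2 / 2) / (x * (σ * Real.sqrt (T - t)))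
        - Real.exp ((1 - 2 * (r - q - a) / σ ^ 2) * (Real.log x - Real.log b + a * (T - t))) *
          ((1 - 2 * (r - q - a) / σ ^ 2) * stdNormalCDF ((Real.log b - Real.log x + (r - q - 2 * a - σ ^ 2 / 2) * (T - t)) / (σ * Real.sqrt (T - t))) / x
            - (Real.sqrt (2 * Real.pi))⁻¹ * Real.exp (-((Real.log b - Real.log x + (r - q - 2 * a - σ ^ 2 / 2) * (T - t)) / (σ * Real.sqrt (T - t))) ^ 2 / 2) / (x * (σ * Real.sqrt (T - t)))))
      (-((Real.sqrt (2 * Real.pi))⁻¹ * Real.exp (-((Real.log y - Real.log b + (r - q - σ ^ 2 / 2) * (T - t)) / (σ * Real.sqrt (T - t))) ^ 2 / 2) * ((Real.log y - Real.log b + (r - q - σ ^ 2 / 2) * (T - t)) / (σ * Real.sqrt (T - t)) / (σ * Real.sqrt (T - t)) + 1) / (y ^ 2 * (σ * Real.sqrt (T - t))))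
        - Real.exp ((1 - 2 * (r - q - a) / σ ^ 2) * (Real.log y - Real.log b + a * (T - t))) *
          (((1 - 2 * (r - q - a) / σ ^ 2) ^ 2 - (1 - 2 * (r - q - a) / σ ^ 2)) * stdNormalCDF ((Real.log b - Real.log y + (r - q - 2 * a - σ ^ 2 / 2) * (T - t)) / (σ * Real.sqrt (T - t))) / y ^ 2
            - (Real.sqrt (2 * Real.pi))⁻¹ * Real.exp (-((Real.log b - Real.log y + (r - q - 2 * a - σ ^ 2 / 2) * (T - t)) / (σ * Real.sqrt (T - t))) ^ 2 / 2) * (2 * (1 - 2 * (r - q - a) / σ ^ 2) - 1 + (Real.log b - Real.log y + (r - q - 2 * a - σ ^ 2 / 2) * (T - t)) / (σ * Real.sqrt (T - t)) / (σ * Real.sqrt (T - t))) / (y ^ 2 * (σ * Real.sqrt (T - t))))) y := by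
  have hs : (0:ℝ) < σ * Real.sqrt (T - t) := by positivity
  have hys : y * (σ * Real.sqrt (T - t)) ≠ 0 := by positivity
  have hlog := Real.hasDerivAt_log hy.ne'
  have h1 : HasDerivAt (fun x : ℝ => (Real.log x - Real.log b + (r - q - σ ^ 2 / 2) * (T - t)) / (σ * Real.sqrt (T - t))) (y⁻¹ / (σ * Real.sqrt (T - t))) y :=
    ((hlog.sub_const _).add_const _).div_const _
  have h2 : HasDerivAt (fun x : ℝ => (Real.log b - Real.log x + (r - q - 2 * a - σ ^ 2 / 2) * (T - t)) / (σ * Real.sqrt (T - t))) (-y⁻¹ / (σ * Real.sqrt (T - t))) y := by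
    have h := ((hlog.const_sub (Real.log b)).add_const ((r - q - 2 * a - σ ^ 2 / 2) * (T - t))).div_const (σ * Real.sqrt (T - t))
    convert h using 1
  have hN2 : HasDerivAt (fun x : ℝ => stdNormalCDF ((Real.log b - Real.log x + (r - q - 2 * a - σ ^ 2 / 2) * (T - t)) / (σ * Real.sqrt (T - t))))
      ((Real.sqrt (2 * Real.pi))⁻¹ * Real.exp (-((Real.log b - Real.log y + (r - q - 2 * a - σ ^ 2 / 2) * (T - t)) / (σ * Real.sqrt (T - t))) ^ 2 / 2) * (-y⁻¹ / (σ * Real.sqrt (T - t)))) y :=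
    (hasDerivAt_stdNormalCDF _).comp y h2
  have hG : HasDerivAt (fun x : ℝ => Real.exp ((1 - 2 * (r - q - a) / σ ^ 2) * (Real.log x - Real.log b + a * (T - t))))
      (Real.exp ((1 - 2 * (r - q - a) / σ ^ 2) * (Real.log y - Real.log b + a * (T - t))) * ((1 - 2 * (r - q - a) / σ ^ 2) * y⁻¹)) y :=
    (((hlog.sub_const _).add_const _).const_mul _).exp
  have hden : HasDerivAt (fun x : ℝ => x * (σ * Real.sqrt (T - t))) (1 * (σ * Real.sqrt (T - t))) y :=
    (hasDerivAt_id y).mul_const _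
  have hT1 := ((((h1.pow 2).neg.div_const 2).exp.const_mul ((Real.sqrt (2 * Real.pi))⁻¹)).div hden hys)
  have hP2 := (hN2.const_mul (1 - 2 * (r - q - a) / σ ^ 2)).div (hasDerivAt_id y) hy.ne'
  have hE2 := ((((h2.pow 2).neg.div_const 2).exp.const_mul ((Real.sqrt (2 * Real.pi))⁻¹)).div hden hys)
  have h := hT1.sub (hG.mul (hP2.sub hE2))
  refine h.congr_deriv ?_
  simp only [Pi.div_apply, Pi.pow_apply, Pi.neg_apply, Pi.mul_apply, Pi.sub_apply, Nat.cast_ofNat, id_eq, Nat.reduceSub, pow_one]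
  set E1 := Real.exp (-((Real.log y - Real.log b + (r - q - σ ^ 2 / 2) * (T - t)) / (σ * Real.sqrt (T - t))) ^ 2 / 2) with hE1d
  set E2 := Real.exp (-((Real.log b - Real.log y + (r - q - 2 * a - σ ^ 2 / 2) * (T - t)) / (σ * Real.sqrt (T - t))) ^ 2 / 2) with hE2d
  set Gv := Real.exp ((1 - 2 * (r - q - a) / σ ^ 2) * (Real.log y - Real.log b + a * (T - t))) with hGd
  set N2 := stdNormalCDF ((Real.log b - Real.log y + (r - q - 2 * a - σ ^ 2 / 2) * (T - t)) / (σ * Real.sqrt (T - t))) with hN2d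
  have hR : (0:ℝ) < Real.sqrt (T - t) := Real.sqrt_pos.mpr hτ
  set R := Real.sqrt (T - t) with hRd
  have hss : R ^ 2 = T - t := Real.sq_sqrt hτ.le
  rw [← hss]
  field_simp [hσ.ne', hR.ne', hy.ne']
  ring

set_option maxHeartbeats 1000000 in
lemma timederiv (r q σ a b T V t : ℝ) (hσ : 0 < σ) (hτ : 0 < T - t) :
    HasDerivAt (fun u : ℝ =>
      stdNormalCDF ((Real.log V - Real.log b + (r - q - σ ^ 2 / 2) * (T - u)) / (σ * Real.sqrt (T - u))) -
        Real.exp ((1 - 2 * (r - q - a) / σ ^ 2) * (Real.log V - Real.log b + a * (T - u))) *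
          stdNormalCDF ((Real.log b - Real.log V + (r - q - 2 * a - σ ^ 2 / 2) * (T - u)) / (σ * Real.sqrt (T - u))))
      ((Real.sqrt (2 * Real.pi))⁻¹ * Real.exp (-((Real.log V - Real.log b + (r - q - σ ^ 2 / 2) * (T - t)) / (σ * Real.sqrt (T - t))) ^ 2 / 2) * ((Real.log V - Real.log b - (r - q - σ ^ 2 / 2) * (T - t)) / (2 * (T - t) * (σ * Real.sqrt (T - t))))
        + Real.exp ((1 - 2 * (r - q - a) / σ ^ 2) * (Real.log V - Real.log b + a * (T - t))) * ((1 - 2 * (r - q - a) / σ ^ 2) * a * stdNormalCDF ((Real.log b - Real.log V + (r - q - 2 * a - σ ^ 2 / 2) * (T - t)) / (σ * Real.sqrt (T - t))))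
        + Real.exp ((1 - 2 * (r - q - a) / σ ^ 2) * (Real.log V - Real.log b + a * (T - t))) * ((Real.sqrt (2 * Real.pi))⁻¹ * Real.exp (-((Real.log b - Real.log V + (r - q - 2 * a - σ ^ 2 / 2) * (T - t)) / (σ * Real.sqrt (T - t))) ^ 2 / 2) * ((Real.log V - Real.log b + (r - q - 2 * a - σ ^ 2 / 2) * (T - t)) / (2 * (T - t) * (σ * Real.sqrt (T - t)))))) t := by
  have hR : (0:ℝ) < Real.sqrt (T - t) := Real.sqrt_pos.mpr hτ
  have hs : (0:ℝ) < σ * Real.sqrt (T - t) := by positivity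
  have hlin : HasDerivAt (fun u : ℝ => T - u) (-1) t := (hasDerivAt_id t).const_sub T
  have hsq : HasDerivAt (fun u : ℝ => Real.sqrt (T - u)) (1 / (2 * Real.sqrt (T - t)) * -1) t :=
    (Real.hasDerivAt_sqrt hτ.ne').comp t hlin
  have hden : HasDerivAt (fun u : ℝ => σ * Real.sqrt (T - u)) (σ * (1 / (2 * Real.sqrt (T - t)) * -1)) t :=
    hsq.const_mul σ
  have hn1 : HasDerivAt (fun u : ℝ => Real.log V - Real.log b + (r - q - σ ^ 2 / 2) * (T - u)) ((r - q - σ ^ 2 / 2) * -1) t :=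
    (hlin.const_mul _).const_add _
  have hn2 : HasDerivAt (fun u : ℝ => Real.log b - Real.log V + (r - q - 2 * a - σ ^ 2 / 2) * (T - u)) ((r - q - 2 * a - σ ^ 2 / 2) * -1) t :=
    (hlin.const_mul _).const_add _
  have hd1 := hn1.div hden hs.ne'
  have hd2 := hn2.div hden hs.ne'
  have hN1 := (hasDerivAt_stdNormalCDF ((Real.log V - Real.log b + (r - q - σ ^ 2 / 2) * (T - t)) / (σ * Real.sqrt (T - t)))).comp t hd1
  have hN2 := (hasDerivAt_stdNormalCDF ((Real.log b - Real.log V + (r - q - 2 * a - σ ^ 2 / 2) * (T - t)) / (σ * Real.sqrt (T - t)))).comp t hd2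
  have hG : HasDerivAt (fun u : ℝ => Real.exp ((1 - 2 * (r - q - a) / σ ^ 2) * (Real.log V - Real.log b + a * (T - u))))
      (Real.exp ((1 - 2 * (r - q - a) / σ ^ 2) * (Real.log V - Real.log b + a * (T - t))) * ((1 - 2 * (r - q - a) / σ ^ 2) * (a * -1))) t :=
    (((hlin.const_mul a).const_add (Real.log V - Real.log b)).const_mul _).exp
  have h := hN1.sub (hG.mul hN2)
  refine h.congr_deriv ?_
  simp only [Function.comp_apply, Pi.div_apply, Pi.pow_apply, Pi.neg_apply, Pi.mul_apply, Pi.sub_apply]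
  set K := (Real.sqrt (2 * Real.pi))⁻¹ with hKd
  set E1 := Real.exp (-((Real.log V - Real.log b + (r - q - σ ^ 2 / 2) * (T - t)) / (σ * Real.sqrt (T - t))) ^ 2 / 2) with hE1d
  set E2 := Real.exp (-((Real.log b - Real.log V + (r - q - 2 * a - σ ^ 2 / 2) * (T - t)) / (σ * Real.sqrt (T - t))) ^ 2 / 2) with hE2d
  set Gv := Real.exp ((1 - 2 * (r - q - a) / σ ^ 2) * (Real.log V - Real.log b + a * (T - t))) with hGd
  set N2 := stdNormalCDF ((Real.log b - Real.log V + (r - q - 2 * a - σ ^ 2 / 2) * (T - t)) / (σ * Real.sqrt (T - t))) with hN2d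
  set R := Real.sqrt (T - t) with hRd
  have hss : R ^ 2 = T - t := Real.sq_sqrt hτ.le
  rw [← hss]
  field_simp [hσ.ne', hR.ne']
  ring

lemma form_eq (r q σ a b T t : ℝ) (hb : 0 < b) (y : ℝ) (hy : 0 < y) :
    stdNormalCDF ((Real.log (y / b) + (r - q - σ ^ 2 / 2) * (T - t)) / (σ * Real.sqrt (T - t))) -
      (y / (b * Real.exp (-a * (T - t)))) ^ (1 - 2 * (r - q - a) / σ ^ 2) *
        stdNormalCDF ((Real.log (b / y) + (r - q - 2 * a - σ ^ 2 / 2) * (T - t)) / (σ * Real.sqrt (T - t))) =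
    stdNormalCDF ((Real.log y - Real.log b + (r - q - σ ^ 2 / 2) * (T - t)) / (σ * Real.sqrt (T - t))) -
        Real.exp ((1 - 2 * (r - q - a) / σ ^ 2) * (Real.log y - Real.log b + a * (T - t))) *
          stdNormalCDF ((Real.log b - Real.log y + (r - q - 2 * a - σ ^ 2 / 2) * (T - t)) / (σ * Real.sqrt (T - t))) := by
  rw [Real.log_div hy.ne' hb.ne', Real.log_div hb.ne' hy.ne',
    Real.rpow_def_of_pos (by positivity), Real.log_div hy.ne' (by positivity),
    Real.log_mul hb.ne' (Real.exp_ne_zero _), Real.log_exp]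
  ring_nf

set_option maxHeartbeats 2000000 in
theorem survival_prob_pde (r q σ a b T : ℝ) (hσ : 0 < σ) (hb : 0 < b) (hT : 0 < T)
    (W : ℝ → ℝ → ℝ)
    (hW : ∀ t < T, ∀ V > 0,
      W V t = stdNormalCDF ((Real.log (V / b) + (r - q - σ ^ 2 / 2) * (T - t)) / (σ * Real.sqrt (T - t))) -
        (V / (b * Real.exp (-a * (T - t)))) ^ (1 - 2 * (r - q - a) / σ ^ 2) *
          stdNormalCDF ((Real.log (b / V) + (r - q - 2 * a - σ ^ 2 / 2) * (T - t)) / (σ * Real.sqrt (T - t)))) :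
    (∀ t ∈ Set.Ioo (0 : ℝ) T, ∀ V > b * Real.exp (-a * (T - t)),
      deriv (fun s => W V s) t +
        (1 / 2) * σ ^ 2 * V ^ 2 * deriv (deriv (fun y => W y t)) V +
        (r - q) * V * deriv (fun y => W y t) V = 0) ∧
    ∀ t, 0 ≤ t → t < T → W (b * Real.exp (-a * (T - t))) t = 0 := by
  constructor
  · rintro t ⟨ht0, htT⟩ V hV
    have hτ : 0 < T - t := sub_pos.mpr htT
    have hV0 : 0 < V := lt_trans (by positivity) hV
    have hR : (0:ℝ) < Real.sqrt (T - t) := Real.sqrt_pos.mpr hτ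
    have hWF : Set.EqOn (fun y => W y t) (fun x : ℝ =>
        stdNormalCDF ((Real.log x - Real.log b + (r - q - σ ^ 2 / 2) * (T - t)) / (σ * Real.sqrt (T - t))) -
        Real.exp ((1 - 2 * (r - q - a) / σ ^ 2) * (Real.log x - Real.log b + a * (T - t))) *
          stdNormalCDF ((Real.log b - Real.log x + (r - q - 2 * a - σ ^ 2 / 2) * (T - t)) / (σ * Real.sqrt (T - t)))) (Set.Ioi 0) := by
      intro y hy
      show W y t = _
      rw [hW t htT y hy]
      exact form_eq r q σ a b T t hb y hy
    have hder : ∀ y ∈ Set.Ioi (0:ℝ), deriv (fun z => W z t) y =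
        (Real.sqrt (2 * Real.pi))⁻¹ * Real.exp (-((Real.log y - Real.log b + (r - q - σ ^ 2 / 2) * (T - t)) / (σ * Real.sqrt (T - t))) ^ 2 / 2) / (y * (σ * Real.sqrt (T - t)))
        - Real.exp ((1 - 2 * (r - q - a) / σ ^ 2) * (Real.log y - Real.log b + a * (T - t))) *
          ((1 - 2 * (r - q - a) / σ ^ 2) * stdNormalCDF ((Real.log b - Real.log y + (r - q - 2 * a - σ ^ 2 / 2) * (T - t)) / (σ * Real.sqrt (T - t))) / y
            - (Real.sqrt (2 * Real.pi))⁻¹ * Real.exp (-((Real.log b - Real.log y + (r - q - 2 * a - σ ^ 2 / 2) * (T - t)) / (σ * Real.sqrt (T - t))) ^ 2 / 2) / (y * (σ * Real.sqrt (T - t)))) := by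
      intro y hy
      have hev : (fun z => W z t) =ᶠ[𝓝 y] (fun x : ℝ =>
          stdNormalCDF ((Real.log x - Real.log b + (r - q - σ ^ 2 / 2) * (T - t)) / (σ * Real.sqrt (T - t))) -
        Real.exp ((1 - 2 * (r - q - a) / σ ^ 2) * (Real.log x - Real.log b + a * (T - t))) *
          stdNormalCDF ((Real.log b - Real.log x + (r - q - 2 * a - σ ^ 2 / 2) * (T - t)) / (σ * Real.sqrt (T - t)))) :=
        Filter.eventuallyEq_of_mem (isOpen_Ioi.mem_nhds hy) hWF
      rw [hev.deriv_eq]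
      exact (space1 r q σ a b T t hσ hτ y hy).deriv
    have e2 : deriv (deriv (fun z => W z t)) V =
        -((Real.sqrt (2 * Real.pi))⁻¹ * Real.exp (-((Real.log V - Real.log b + (r - q - σ ^ 2 / 2) * (T - t)) / (σ * Real.sqrt (T - t))) ^ 2 / 2) * ((Real.log V - Real.log b + (r - q - σ ^ 2 / 2) * (T - t)) / (σ * Real.sqrt (T - t)) / (σ * Real.sqrt (T - t)) + 1) / (V ^ 2 * (σ * Real.sqrt (T - t))))
        - Real.exp ((1 - 2 * (r - q - a) / σ ^ 2) * (Real.log V - Real.log b + a * (T - t))) *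
          (((1 - 2 * (r - q - a) / σ ^ 2) ^ 2 - (1 - 2 * (r - q - a) / σ ^ 2)) * stdNormalCDF ((Real.log b - Real.log V + (r - q - 2 * a - σ ^ 2 / 2) * (T - t)) / (σ * Real.sqrt (T - t))) / V ^ 2
            - (Real.sqrt (2 * Real.pi))⁻¹ * Real.exp (-((Real.log b - Real.log V + (r - q - 2 * a - σ ^ 2 / 2) * (T - t)) / (σ * Real.sqrt (T - t))) ^ 2 / 2) * (2 * (1 - 2 * (r - q - a) / σ ^ 2) - 1 + (Real.log b - Real.log V + (r - q - 2 * a - σ ^ 2 / 2) * (T - t)) / (σ * Real.sqrt (T - t)) / (σ * Real.sqrt (T - t))) / (V ^ 2 * (σ * Real.sqrt (T - t)))) := by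
      have hev2 : deriv (fun z => W z t) =ᶠ[𝓝 V] (fun x : ℝ =>
          (Real.sqrt (2 * Real.pi))⁻¹ * Real.exp (-((Real.log x - Real.log b + (r - q - σ ^ 2 / 2) * (T - t)) / (σ * Real.sqrt (T - t))) ^ 2 / 2) / (x * (σ * Real.sqrt (T - t)))
        - Real.exp ((1 - 2 * (r - q - a) / σ ^ 2) * (Real.log x - Real.log b + a * (T - t))) *
          ((1 - 2 * (r - q - a) / σ ^ 2) * stdNormalCDF ((Real.log b - Real.log x + (r - q - 2 * a - σ ^ 2 / 2) * (T - t)) / (σ * Real.sqrt (T - t))) / x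
            - (Real.sqrt (2 * Real.pi))⁻¹ * Real.exp (-((Real.log b - Real.log x + (r - q - 2 * a - σ ^ 2 / 2) * (T - t)) / (σ * Real.sqrt (T - t))) ^ 2 / 2) / (x * (σ * Real.sqrt (T - t))))) :=
        Filter.eventuallyEq_of_mem (isOpen_Ioi.mem_nhds (Set.mem_Ioi.mpr hV0)) (fun y hy => hder y hy)
      rw [hev2.deriv_eq]
      exact (space2 r q σ a b T t hσ hτ V hV0).deriv
    have hWG : Set.EqOn (fun u => W V u) (fun u : ℝ =>
        stdNormalCDF ((Real.log V - Real.log b + (r - q - σ ^ 2 / 2) * (T - u)) / (σ * Real.sqrt (T - u))) -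
        Real.exp ((1 - 2 * (r - q - a) / σ ^ 2) * (Real.log V - Real.log b + a * (T - u))) *
          stdNormalCDF ((Real.log b - Real.log V + (r - q - 2 * a - σ ^ 2 / 2) * (T - u)) / (σ * Real.sqrt (T - u)))) (Set.Iio T) := by
      intro u hu
      show W V u = _
      rw [hW u hu V hV0]
      exact form_eq r q σ a b T u hb V hV0
    have e0 : deriv (fun s => W V s) t =
        (Real.sqrt (2 * Real.pi))⁻¹ * Real.exp (-((Real.log V - Real.log b + (r - q - σ ^ 2 / 2) * (T - t)) / (σ * Real.sqrt (T - t))) ^ 2 / 2) * ((Real.log V - Real.log b - (r - q - σ ^ 2 / 2) * (T - t)) / (2 * (T - t) * (σ * Real.sqrt (T - t))))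
        + Real.exp ((1 - 2 * (r - q - a) / σ ^ 2) * (Real.log V - Real.log b + a * (T - t))) * ((1 - 2 * (r - q - a) / σ ^ 2) * a * stdNormalCDF ((Real.log b - Real.log V + (r - q - 2 * a - σ ^ 2 / 2) * (T - t)) / (σ * Real.sqrt (T - t))))
        + Real.exp ((1 - 2 * (r - q - a) / σ ^ 2) * (Real.log V - Real.log b + a * (T - t))) * ((Real.sqrt (2 * Real.pi))⁻¹ * Real.exp (-((Real.log b - Real.log V + (r - q - 2 * a - σ ^ 2 / 2) * (T - t)) / (σ * Real.sqrt (T - t))) ^ 2 / 2) * ((Real.log V - Real.log b + (r - q - 2 * a - σ ^ 2 / 2) * (T - t)) / (2 * (T - t) * (σ * Real.sqrt (T - t))))) := by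
      have hevt : (fun u => W V u) =ᶠ[𝓝 t] (fun u : ℝ =>
          stdNormalCDF ((Real.log V - Real.log b + (r - q - σ ^ 2 / 2) * (T - u)) / (σ * Real.sqrt (T - u))) -
        Real.exp ((1 - 2 * (r - q - a) / σ ^ 2) * (Real.log V - Real.log b + a * (T - u))) *
          stdNormalCDF ((Real.log b - Real.log V + (r - q - 2 * a - σ ^ 2 / 2) * (T - u)) / (σ * Real.sqrt (T - u)))) :=
        Filter.eventuallyEq_of_mem (Iio_mem_nhds htT) hWG
      rw [hevt.deriv_eq]
      exact (timederiv r q σ a b T V t hσ hτ).deriv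
    rw [e0, e2, hder V (Set.mem_Ioi.mpr hV0)]
    set K := (Real.sqrt (2 * Real.pi))⁻¹ with hKd
    set E1 := Real.exp (-((Real.log V - Real.log b + (r - q - σ ^ 2 / 2) * (T - t)) / (σ * Real.sqrt (T - t))) ^ 2 / 2) with hE1d
    set E2 := Real.exp (-((Real.log b - Real.log V + (r - q - 2 * a - σ ^ 2 / 2) * (T - t)) / (σ * Real.sqrt (T - t))) ^ 2 / 2) with hE2d
    set Gv := Real.exp ((1 - 2 * (r - q - a) / σ ^ 2) * (Real.log V - Real.log b + a * (T - t))) with hGd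
    set N2 := stdNormalCDF ((Real.log b - Real.log V + (r - q - 2 * a - σ ^ 2 / 2) * (T - t)) / (σ * Real.sqrt (T - t))) with hN2d
    set R := Real.sqrt (T - t) with hRd
    have hss : R ^ 2 = T - t := Real.sq_sqrt hτ.le
    rw [← hss]
    field_simp [hσ.ne', hR.ne', hV0.ne']
    ring
  · intro t ht0 htT
    have hτ : 0 < T - t := sub_pos.mpr htT
    have hVb : 0 < b * Real.exp (-a * (T - t)) := by positivity
    rw [hW t htT _ hVb]
    have h1 : Real.log (b * Real.exp (-a * (T - t)) / b) = -a * (T - t) := by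
      rw [mul_comm, mul_div_assoc, div_self hb.ne', mul_one, Real.log_exp]
    have h2 : Real.log (b / (b * Real.exp (-a * (T - t)))) = a * (T - t) := by
      rw [show b / (b * Real.exp (-a * (T - t))) = Real.exp (a * (T - t)) by
        rw [eq_comm, eq_div_iff (by positivity), ← mul_assoc, mul_comm (Real.exp (a * (T-t))) b,
          mul_assoc, ← Real.exp_add]
        simp, Real.log_exp]
    have h3 : (b * Real.exp (-a * (T - t)) / (b * Real.exp (-a * (T - t)))) ^ (1 - 2 * (r - q - a) / σ ^ 2) = (1:ℝ) := by
      rw [div_self (by positivity : (b * Real.exp (-a * (T - t))) ≠ 0), Real.one_rpow]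
    rw [h1, h2, h3, one_mul]
    rw [show (a * (T - t) + (r - q - 2 * a - σ ^ 2 / 2) * (T - t)) = (-a * (T - t) + (r - q - σ ^ 2 / 2) * (T - t)) by ring]
    exact sub_self _
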